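/- Let α ∈ (0,2), δ ∈ (−α, α), d ≥ 1, and suppose g(r) = Σ_{n≥0} a_{2n+1} r^{2n+1} on (−1,1) with a_{2n+1} > 0 and a_{2n+1} = O(n^{α−2}), and g(1/r) = r^{d−2+α} g(r) for r > 0. Then for every λ ∈ ℝ, H₁(λ) := ∫_0^∞ r^{iλ − 2 + α/2 − δ/2} g(r) dr = Σ_{n≥0} a_{2n+1} [ 1/(iλ + 2n + α/2 − δ/2) + 1/(−iλ + d + 2n + α/2 + δ/2) ], and the integral converges absolutely. -/

import Mathlib

open Real Complex MeasureTheory Set ENNReal NNReal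

lemma keyA (α : ℝ) (hα2 : α < 2) (a : ℕ → ℝ) (C : ℝ)
    (hapos : ∀ n, 0 < a n)
    (habd : ∀ n : ℕ, 1 ≤ n → a n ≤ C * (n : ℝ) ^ (α - 2))
    (g : ℝ → ℝ)
    (hg : ∀ r ∈ Set.Ioo (0 : ℝ) 1, g r = ∑' n : ℕ, a n * r ^ (2 * n + 1))
    (s : ℂ) (hs : -2 < s.re) :
    IntegrableOn (fun r : ℝ => (r : ℂ) ^ s * (g r : ℂ)) (Set.Ioo 0 1) ∧
    HasSum (fun n : ℕ => (a n : ℂ) / (s + 2 * n + 2))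
      (∫ r in Set.Ioo (0 : ℝ) 1, (r : ℂ) ^ s * (g r : ℂ)) := by
  set μ := volume.restrict (Set.Ioo (0:ℝ) 1) with hμ
  set w : ℕ → ℂ := fun n => s + (2 * (n:ℂ) + 1) with hw
  set F : ℕ → ℝ → ℂ := fun n r => (a n : ℂ) * (r : ℂ) ^ (w n) with hF
  have hC : 0 < C := by
    have h1 := habd 1 le_rfl
    simpa using lt_of_lt_of_le (hapos 1) h1
  have hwre : ∀ n : ℕ, (w n).re = s.re + (2 * n + 1) := by
    intro n; simp [hw]
  have hwre' : ∀ n : ℕ, -1 < (w n).re := by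
    intro n; rw [hwre]
    have : (0:ℝ) ≤ n := n.cast_nonneg
    linarith
  -- each F n integrable
  have hFint : ∀ n, Integrable (F n) μ :=
    fun n => ((intervalIntegral.integrableOn_Ioo_cpow_iff one_pos).mpr (hwre' n)).const_mul _
  -- denominators nonzero
  have hposre : ∀ n : ℕ, 0 < (w n + 1).re := by
    intro n
    rw [Complex.add_re, hwre n, Complex.one_re]
    have : (0:ℝ) ≤ n := n.cast_nonneg
    linarith
  have hne : ∀ n : ℕ, w n + 1 ≠ 0 := by
    intro n h
    have := hposre n
    rw [h] at this; simp at this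
  -- value of each integral
  have hFval : ∀ n, ∫ r, F n r ∂μ = (a n : ℂ) / (w n + 1) := by
    intro n
    have h1 : ∫ r, F n r ∂μ = (a n : ℂ) * ∫ r, (r:ℂ) ^ (w n) ∂μ := by
      simpa [hF] using integral_smul ((a n : ℂ)) (fun r : ℝ => (r:ℂ) ^ (w n)) (μ := μ)
    rw [h1, hμ, ← integral_Ioc_eq_integral_Ioo,
      ← intervalIntegral.integral_of_le (zero_le_one (α := ℝ)),
      integral_cpow (Or.inl (hwre' n))]
    rw [Complex.ofReal_one, Complex.ofReal_zero, Complex.one_cpow,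
      Complex.zero_cpow (hne n)]
    ring
  -- norm of F n
  have hnorm : ∀ n : ℕ, ∀ r ∈ Set.Ioo (0:ℝ) 1,
      ‖F n r‖ = a n * r ^ ((w n).re) := by
    intro n r hr
    rw [hF]
    simp only [norm_mul, Complex.norm_real, Real.norm_eq_abs,
      abs_of_pos (hapos n), Complex.norm_cpow_eq_rpow_re_of_pos hr.1]
  -- integral of the norms
  have hInorm : ∀ n : ℕ, ∫ r, ‖F n r‖ ∂μ = a n / (s.re + 2 * n + 2) := by
    intro n
    rw [hμ]
    rw [setIntegral_congr_fun measurableSet_Ioo (fun r hr => hnorm n r hr)]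
    have h1 : ∫ r in Set.Ioo (0:ℝ) 1, a n * r ^ ((w n).re)
        = a n * ∫ r in Set.Ioo (0:ℝ) 1, r ^ ((w n).re) := by
      simpa using integral_smul (a n) (fun r : ℝ => r ^ ((w n).re))
        (μ := volume.restrict (Set.Ioo (0:ℝ) 1))
    rw [h1, ← integral_Ioc_eq_integral_Ioo,
      ← intervalIntegral.integral_of_le (zero_le_one (α := ℝ)),
      integral_rpow (Or.inl (hwre' n))]
    have hz : (w n).re + 1 ≠ 0 := by
      have := hposre n; rw [Complex.add_re, Complex.one_re] at this; linarith
    rw [Real.one_rpow, Real.zero_rpow hz, hwre n]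
    rw [show s.re + (2 * (n:ℝ) + 1) + 1 = s.re + 2 * n + 2 by ring]
    ring
  -- summability of the integrals of norms
  have hsummable : Summable (fun n : ℕ => a n / (s.re + 2 * n + 2)) := by
    apply (_root_.summable_nat_add_iff 1).1
    have hbig : Summable (fun n : ℕ => (C/2) * ((n:ℝ)+1) ^ (α - 3)) := by
      apply Summable.mul_left
      have := (Real.summable_nat_rpow (p := α - 3)).mpr (by linarith)
      exact_mod_cast (_root_.summable_nat_add_iff 1).mpr this
    apply Summable.of_nonneg_of_le _ _ hbig
    · intro n
      have h1 : (0:ℝ) < s.re + 2 * ((n:ℝ)+1) + 2 := by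
        have : (0:ℝ) ≤ n := n.cast_nonneg
        linarith
      push_cast
      exact div_nonneg (hapos _).le h1.le
    · intro n
      have hn1 : (0:ℝ) < (n:ℝ) + 1 := by positivity
      have hden : 2 * ((n:ℝ)+1) ≤ s.re + 2 * ((n:ℝ)+1) + 2 := by linarith
      have hden0 : (0:ℝ) < 2 * ((n:ℝ)+1) := by linarith
      have hnum : a (n+1) ≤ C * ((n:ℝ)+1) ^ (α - 2) := by
        have := habd (n+1) (Nat.le_add_left 1 n)
        push_cast at this ⊢
        linarith
      calc a (n+1) / (s.re + 2 * ((n:ℕ)+1:ℕ) + 2)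
          ≤ (C * ((n:ℝ)+1) ^ (α - 2)) / (2 * ((n:ℝ)+1)) := by
            push_cast
            apply div_le_div₀ (by positivity) hnum (by linarith) hden
        _ = (C/2) * ((n:ℝ)+1) ^ (α - 3) := by
            rw [show α - 3 = (α - 2) + (-1) by ring, Real.rpow_add hn1,
              Real.rpow_neg_one]
            field_simp
  have hsumnorm : Summable (fun n : ℕ => ∫ r, ‖F n r‖ ∂μ) := by
    simpa only [hInorm] using hsummable
  -- uniform bound on coefficients
  have hB : ∀ n, a n ≤ max (a 0) C := by
    intro n
    match n with
    | 0 => exact le_max_left _ _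
    | (m+1) =>
      refine le_trans (habd (m+1) (Nat.le_add_left 1 m)) (le_trans ?_ (le_max_right _ _))
      have h1 : ((m:ℝ)+1) ^ (α - 2) ≤ 1 := by
        apply Real.rpow_le_one_of_one_le_of_nonpos (le_add_of_nonneg_left m.cast_nonneg) (by linarith)
      calc C * ((m+1:ℕ):ℝ) ^ (α - 2) ≤ C * 1 := by
            push_cast
            exact mul_le_mul_of_nonneg_left h1 hC.le
        _ = C := mul_one C
  -- pointwise summability of norms
  have hnormsum : ∀ r ∈ Set.Ioo (0:ℝ) 1, Summable (fun n => ‖F n r‖) := by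
    intro r hr
    have hrw : ∀ n : ℕ, ‖F n r‖ = (a n * (r^2)^n) * r ^ (s.re + 1) := by
      intro n
      rw [hnorm n r hr, hwre n]
      rw [show s.re + (2 * (n:ℝ) + 1) = (s.re + 1) + ((n * 2 : ℕ) : ℝ) by push_cast; ring,
        Real.rpow_add hr.1, Real.rpow_natCast, pow_mul]
      ring
    rw [funext hrw]
    apply Summable.mul_right
    have hgeo : Summable (fun n : ℕ => max (a 0) C * (r^2)^n) := by
      apply Summable.mul_left
      apply summable_geometric_of_lt_one (by positivity)
      nlinarith [hr.1, hr.2]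
    apply Summable.of_nonneg_of_le _ _ hgeo
    · intro n; exact mul_nonneg (hapos n).le (by positivity)
    · intro n
      exact mul_le_mul_of_nonneg_right (hB n) (by positivity)
  have hFsum : ∀ r ∈ Set.Ioo (0:ℝ) 1, Summable (fun n => F n r) :=
    fun r hr => (hnormsum r hr).of_norm
  -- measurability
  have hFmeas : ∀ n, AEStronglyMeasurable (F n) μ := fun n => (hFint n).1
  have hmeas_tsum : AEStronglyMeasurable (fun r => ∑' n, F n r) μ := by
    apply aestronglyMeasurable_of_tendsto_ae (u := Filter.atTop)
      (f := fun k r => ∑ n ∈ Finset.range k, F n r)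
    · intro k
      exact Finset.aestronglyMeasurable_fun_sum _ fun n _ => hFmeas n
    · filter_upwards [ae_restrict_mem measurableSet_Ioo] with r hr
      exact (hFsum r hr).hasSum.tendsto_sum_nat
  -- finiteness of sum of lintegrals
  have hkey : ∑' n, ∫⁻ r, ‖F n r‖₊ ∂μ ≠ ⊤ := by
    have h1 : ∀ n : ℕ, ∫⁻ r, ‖F n r‖₊ ∂μ = ENNReal.ofReal (∫ r, ‖F n r‖ ∂μ) := by
      intro n
      exact MeasureTheory.lintegral_coe_eq_integral (fun r => ‖F n r‖₊) (hFint n).norm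
    rw [funext h1, ← ENNReal.ofReal_tsum_of_nonneg
      (fun n => integral_nonneg fun r => norm_nonneg _) hsumnorm]
    exact ENNReal.ofReal_ne_top
  -- integrability of the tsum
  have hint_tsum : Integrable (fun r => ∑' n, F n r) μ := by
    refine ⟨hmeas_tsum, ?_⟩
    rw [MeasureTheory.hasFiniteIntegral_def]
    calc ∫⁻ r, ‖(∑' n, F n r)‖₊ ∂μ ≤ ∫⁻ r, (∑' n, (‖F n r‖₊ : ℝ≥0∞)) ∂μ := by
          apply lintegral_mono_ae
          filter_upwards [ae_restrict_mem measurableSet_Ioo] with r hr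
          calc (‖(∑' n, F n r)‖₊ : ℝ≥0∞) = ENNReal.ofReal ‖(∑' n, F n r)‖ :=
                (ofReal_norm _).symm
            _ ≤ ENNReal.ofReal (∑' n, ‖F n r‖) :=
                ENNReal.ofReal_le_ofReal (norm_tsum_le_tsum_norm (hnormsum r hr))
            _ = ∑' n, ENNReal.ofReal ‖F n r‖ :=
                ENNReal.ofReal_tsum_of_nonneg (fun n => norm_nonneg _) (hnormsum r hr)
            _ = ∑' n, (‖F n r‖₊ : ℝ≥0∞) := by
                simp only [ofReal_norm, enorm_eq_nnnorm]
      _ = ∑' n, ∫⁻ r, ‖F n r‖₊ ∂μ := lintegral_tsum fun n => (hFmeas n).enorm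
      _ < ⊤ := lt_top_iff_ne_top.2 hkey
  -- the integrand equals the tsum on the set
  have hEq : Set.EqOn (fun r : ℝ => (r : ℂ) ^ s * (g r : ℂ)) (fun r => ∑' n, F n r)
      (Set.Ioo (0:ℝ) 1) := by
    intro r hr
    have hr0 : (r:ℂ) ≠ 0 := Complex.ofReal_ne_zero.mpr hr.1.ne'
    simp only
    rw [hg r hr, Complex.ofReal_tsum, ← _root_.tsum_mul_left]
    congr 1
    funext n
    rw [hF, hw]
    push_cast
    rw [Complex.cpow_add _ _ hr0,
      show (2 * (n:ℂ) + 1) = (((2 * n + 1 : ℕ) : ℂ)) by push_cast; ring,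
      Complex.cpow_natCast]
    push_cast
    ring
  constructor
  · exact IntegrableOn.congr_fun hint_tsum hEq.symm measurableSet_Ioo
  · have hhs := MeasureTheory.hasSum_integral_of_summable_integral_norm hFint hsumnorm
    rw [funext hFval] at hhs
    have hIeq : ∫ r in Set.Ioo (0:ℝ) 1, (r : ℂ) ^ s * (g r : ℂ) = ∫ r, ∑' n, F n r ∂μ :=
      setIntegral_congr_fun measurableSet_Ioo hEq
    rw [hIeq]
    have : ∀ n : ℕ, w n + 1 = s + 2 * n + 2 := by intro n; rw [hw]; ring
    simpa only [this] using hhs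

/-- Mellin transform of the kernel: absolute convergence and series formula. -/
theorem stmt_12 (d : ℕ) (hd : 1 ≤ d) (α δ : ℝ) (hα0 : 0 < α) (hα2 : α < 2)
    (hδ1 : -α < δ) (hδ2 : δ < α)
    (g : ℝ → ℝ) (a : ℕ → ℝ) (C : ℝ)
    (hapos : ∀ n, 0 < a n)
    (habd : ∀ n : ℕ, 1 ≤ n → a n ≤ C * (n : ℝ) ^ (α - 2))
    (hg : ∀ r ∈ Set.Ioo (-1 : ℝ) 1, g r = ∑' n : ℕ, a n * r ^ (2 * n + 1))
    (hscal : ∀ r : ℝ, 0 < r → g (1 / r) = r ^ ((d : ℝ) - 2 + α) * g r)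
    (lam : ℝ) :
    MeasureTheory.IntegrableOn
      (fun r : ℝ => (r : ℂ) ^ (Complex.I * lam - 2 + (α : ℂ) / 2 - (δ : ℂ) / 2) * (g r : ℂ))
      (Set.Ioi (0 : ℝ)) ∧
    (∫ r in Set.Ioi (0 : ℝ),
        (r : ℂ) ^ (Complex.I * lam - 2 + (α : ℂ) / 2 - (δ : ℂ) / 2) * (g r : ℂ))
      = ∑' n : ℕ, (a n : ℂ) *
          (1 / (Complex.I * lam + 2 * n + (α : ℂ) / 2 - (δ : ℂ) / 2) +
           1 / (-(Complex.I * lam) + d + 2 * n + (α : ℂ) / 2 + (δ : ℂ) / 2)) := by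
  set s₁ : ℂ := Complex.I * lam - 2 + (α : ℂ) / 2 - (δ : ℂ) / 2 with hs₁def
  set s₂ : ℂ := -s₁ + (d : ℂ) - 4 + (α : ℂ) with hs₂def
  have hg' : ∀ r ∈ Set.Ioo (0:ℝ) 1, g r = ∑' n : ℕ, a n * r ^ (2*n+1) :=
    fun r hr => hg r ⟨by linarith [hr.1], hr.2⟩
  have hs₁re : s₁.re = -2 + α/2 - δ/2 := by
    rw [hs₁def]; simp
  have hs₂re : s₂.re = (d:ℝ) - 2 + α/2 + δ/2 := by
    rw [hs₂def]; simp [hs₁re]; ring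
  have hd1 : (1:ℝ) ≤ d := by exact_mod_cast hd
  obtain ⟨hint1, hsum1⟩ := keyA α hα2 a C hapos habd g hg' s₁ (by rw [hs₁re]; linarith)
  obtain ⟨hint2', hsum2'⟩ := keyA α hα2 a C hapos habd g hg' s₂ (by rw [hs₂re]; linarith)
  -- change of variables  r = 1/x
  have himg : (fun x : ℝ => x⁻¹) '' (Set.Ioo 0 1) = Set.Ioi 1 := by
    ext x
    constructor
    · rintro ⟨y, hy, rfl⟩
      have h := mul_inv_cancel₀ hy.1.ne'
      have hyi : (0:ℝ) < y⁻¹ := inv_pos.mpr hy.1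
      have : 1 < y⁻¹ := by nlinarith [hy.2]
      exact this
    · intro hx
      have hx1 : (1:ℝ) < x := hx
      have hx0 : (0:ℝ) < x := lt_trans one_pos hx1
      refine ⟨x⁻¹, ⟨inv_pos.mpr hx0, ?_⟩, inv_inv x⟩
      have h := mul_inv_cancel₀ hx0.ne'
      nlinarith [inv_pos.mpr hx0]
  have hderiv : ∀ x ∈ Set.Ioo (0:ℝ) 1,
      HasDerivWithinAt (fun y : ℝ => y⁻¹) (-(x^2)⁻¹) (Set.Ioo 0 1) x :=
    fun x hx => (hasDerivAt_inv hx.1.ne').hasDerivWithinAt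
  have hinj : Set.InjOn (fun y : ℝ => y⁻¹) (Set.Ioo 0 1) :=
    fun x _ y _ h => inv_injective h
  have heq : ∀ x ∈ Set.Ioo (0:ℝ) 1,
      |(-(x^2)⁻¹)| • (((x⁻¹ : ℝ) : ℂ) ^ s₁ * ((g x⁻¹ : ℝ) : ℂ)) = (x:ℂ) ^ s₂ * (g x : ℂ) := by
    intro x hx
    have hx0 : (0:ℝ) < x := hx.1
    have hxc : (x:ℂ) ≠ 0 := Complex.ofReal_ne_zero.mpr hx0.ne'
    have h1 : |(-(x^2)⁻¹)| = (x^2)⁻¹ := by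
      rw [abs_neg, abs_inv, abs_of_pos (by positivity)]
    have h2 : g x⁻¹ = x ^ ((d:ℝ) - 2 + α) * g x := by
      rw [← one_div]; exact hscal x hx0
    have h3 : ((x⁻¹ : ℝ) : ℂ) ^ s₁ = (x:ℂ) ^ (-s₁) := by
      rw [Complex.ofReal_inv, Complex.inv_cpow _ _
        (by rw [Complex.arg_ofReal_of_nonneg hx0.le]; exact (Real.pi_ne_zero).symm),
        ← Complex.cpow_neg]
    have e1 : (((x^2)⁻¹ : ℝ) : ℂ) = (x:ℂ) ^ (-2 : ℂ) := by
      push_cast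
      rw [show (-2:ℂ) = -((2:ℕ):ℂ) by norm_num, Complex.cpow_neg, Complex.cpow_natCast]
    have e2 : ((x ^ ((d:ℝ) - 2 + α) : ℝ) : ℂ) = (x:ℂ) ^ (((d:ℂ) - 2 + (α:ℂ))) := by
      rw [Complex.ofReal_cpow hx0.le]
      norm_num
    calc |(-(x^2)⁻¹)| • (((x⁻¹ : ℝ) : ℂ) ^ s₁ * ((g x⁻¹ : ℝ) : ℂ))
        = (x:ℂ) ^ (-2:ℂ) * (x:ℂ) ^ (-s₁) * (x:ℂ) ^ (((d:ℂ) - 2 + (α:ℂ))) * (g x : ℂ) := by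
          rw [h1, Complex.real_smul, h3, h2, e1, Complex.ofReal_mul, e2]
          ring
      _ = (x:ℂ) ^ s₂ * (g x : ℂ) := by
          rw [← Complex.cpow_add _ _ hxc, ← Complex.cpow_add _ _ hxc,
            show (-2:ℂ) + -s₁ + ((d:ℂ) - 2 + (α:ℂ)) = s₂ by rw [hs₂def]; ring]
  have hint2 : IntegrableOn (fun r : ℝ => (r : ℂ) ^ s₁ * (g r : ℂ)) (Set.Ioi 1) := by
    rw [← himg, integrableOn_image_iff_integrableOn_abs_deriv_smul measurableSet_Ioo hderiv hinj]
    exact IntegrableOn.congr_fun hint2' (fun x hx => (heq x hx).symm) measurableSet_Ioo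
  have hval2 : ∫ x in Set.Ioi (1:ℝ), (x : ℂ) ^ s₁ * (g x : ℂ)
      = ∫ x in Set.Ioo (0:ℝ) 1, (x : ℂ) ^ s₂ * (g x : ℂ) := by
    rw [← himg, integral_image_eq_integral_abs_deriv_smul measurableSet_Ioo hderiv hinj]
    exact setIntegral_congr_fun measurableSet_Ioo heq
  have hintIoc : IntegrableOn (fun r : ℝ => (r : ℂ) ^ s₁ * (g r : ℂ)) (Set.Ioc 0 1) :=
    hint1.congr_set_ae (MeasureTheory.Ioo_ae_eq_Ioc (a := (0:ℝ)) (b := 1)).symm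
  constructor
  · rw [← Set.Ioc_union_Ioi_eq_Ioi (zero_le_one (α := ℝ))]
    exact hintIoc.union hint2
  · rw [← Set.Ioc_union_Ioi_eq_Ioi (zero_le_one (α := ℝ)),
      setIntegral_union (Set.Ioc_disjoint_Ioi le_rfl) measurableSet_Ioi hintIoc hint2,
      integral_Ioc_eq_integral_Ioo, hval2]
    have htot := hsum1.add hsum2'
    rw [← htot.tsum_eq]
    apply tsum_congr
    intro n
    rw [show s₁ + 2*(n:ℂ) + 2 = Complex.I*lam + 2*n + (α:ℂ)/2 - (δ:ℂ)/2 by rw [hs₁def]; ring,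
      show s₂ + 2*(n:ℂ) + 2 = -(Complex.I*lam) + d + 2*n + (α:ℂ)/2 + (δ:ℂ)/2 by
        rw [hs₂def, hs₁def]; ring,
      mul_add, mul_one_div, mul_one_div]
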